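/- (Distance bound for the level-1 homology of the double product: d̆_1 ≥ min(d̃_0, d̃_{−1}ᵀ).) Let δ_{−1} ∈ M_{n0 × n_{−1}}(F2) and δ_0 ∈ M_{n1 × n0}(F2) satisfy δ_0·δ_{−1} = 0. Suppose S_a ∈ M_{n0 × n_{−1}}(F2) and S_b ∈ M_{n1 × n0}(F2) satisfy δ_0·S_a = S_b·δ_{−1}, and that there are no matrices R_a ∈ M_{n_{−1} × n_{−1}}(F2), R_b ∈ M_{n0 × n0}(F2), R_c ∈ M_{n1 × n1}(F2) with S_a = δ_{−1}·R_a + R_b·δ_{−1} and S_b = δ_0·R_b + R_c·δ_0. Then either there exists c with δ_0·c = 0, c not in the image of δ_{−1}, and |c| ≤ |S_a| + |S_b|, or there exists c' with δ_{−1}ᵀ·c' = 0, c' not in the image of δ_0ᵀ, and |c'| ≤ |S_a| + |S_b|. -/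

import Mathlib

open Matrix
open scoped Kronecker

abbrev F2 := ZMod 2

/-- Hamming weight of a vector over `F2`. -/
def vwt {ι : Type*} [Fintype ι] (v : ι → F2) : ℕ :=
  (Finset.univ.filter fun i => v i ≠ 0).card

/-- Hamming weight of a matrix over `F2` (number of nonzero entries). -/
def mwt {ι κ : Type*} [Fintype ι] [Fintype κ] (M : Matrix ι κ F2) : ℕ :=
  (Finset.univ.filter fun p : ι × κ => M p.1 p.2 ≠ 0).card

/-- Nullity of a matrix over `F2`: dimension of the kernel of the induced linear map. -/
noncomputable def nullity {ι κ : Type*} [Fintype ι] [Fintype κ] (M : Matrix ι κ F2) : ℕ :=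
  Module.finrank F2 (LinearMap.ker M.mulVecLin)

section helpers

variable {K : Type*} [Field K] {V₁ V₂ V₃ : Type*}
  [AddCommGroup V₁] [Module K V₁] [AddCommGroup V₂] [Module K V₂]
  [AddCommGroup V₃] [Module K V₃]

/-- Lift through a map: if every value of `g` is in the range of `f`, then `g`
factors as `f ∘ u`. -/
lemma lift_aux (f : V₁ →ₗ[K] V₂) (g : V₃ →ₗ[K] V₂)
    (h : ∀ x, ∃ y, f y = g x) : ∃ u : V₃ →ₗ[K] V₁, f.comp u = g := by
  obtain ⟨σ, hσ⟩ := f.rangeRestrict.exists_rightInverse_of_surjective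
    (LinearMap.range_eq_top.2 f.surjective_rangeRestrict)
  refine ⟨σ.comp (g.codRestrict (LinearMap.range f) fun x => by
    obtain ⟨y, hy⟩ := h x; exact ⟨y, hy⟩), ?_⟩
  ext x
  have := congrArg Subtype.val (LinearMap.congr_fun hσ
    (g.codRestrict (LinearMap.range f) (fun x => by obtain ⟨y, hy⟩ := h x; exact ⟨y, hy⟩) x))
  simpa using this

/-- Factor through a map: if `ker f ≤ ker g`, then `g` factors as `u ∘ f`. -/
lemma factor_aux (f : V₁ →ₗ[K] V₂) (g : V₁ →ₗ[K] V₃)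
    (h : ∀ x, f x = 0 → g x = 0) : ∃ u : V₂ →ₗ[K] V₃, u.comp f = g := by
  obtain ⟨σ, hσ⟩ := f.rangeRestrict.exists_rightInverse_of_surjective
    (LinearMap.range_eq_top.2 f.surjective_rangeRestrict)
  obtain ⟨u, hu⟩ := LinearMap.exists_extend (g.comp σ)
  refine ⟨u, ?_⟩
  ext x
  have h1 : u (f x) = g (σ ⟨f x, LinearMap.mem_range_self f x⟩) :=
    LinearMap.congr_fun hu ⟨f x, LinearMap.mem_range_self f x⟩
  have h2 : f (σ ⟨f x, LinearMap.mem_range_self f x⟩) = f x :=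
    congrArg Subtype.val (LinearMap.congr_fun hσ ⟨f x, LinearMap.mem_range_self f x⟩)
  have h3 : g (σ ⟨f x, LinearMap.mem_range_self f x⟩) = g x := by
    have := h (σ ⟨f x, LinearMap.mem_range_self f x⟩ - x) (by simp [h2])
    rw [map_sub, sub_eq_zero] at this
    exact this
  simpa [h3] using h1

end helpers

/-- Fredholm alternative over `F2`: `v` is in the column span of `M` iff it is
orthogonal to the kernel of `Mᵀ`. -/
lemma mem_range_of_orth {m n : ℕ} (M : Matrix (Fin m) (Fin n) F2) (v : Fin m → F2)
    (h : ∀ y : Fin m → F2, Mᵀ.mulVec y = 0 → y ⬝ᵥ v = 0) :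
    ∃ x, M.mulVec x = v := by
  by_contra hv
  have hvmem : v ∉ LinearMap.range M.mulVecLin := by
    intro ⟨x, hx⟩; exact hv ⟨x, hx⟩
  set p := LinearMap.range M.mulVecLin with hp
  have hq : Submodule.Quotient.mk (p := p) v ≠ 0 := by
    simpa [Submodule.Quotient.mk_eq_zero] using hvmem
  obtain ⟨φ, hφ⟩ : ∃ φ : Module.Dual F2 ((Fin m → F2) ⧸ p),
      φ (Submodule.Quotient.mk v) ≠ 0 := by
    by_contra hall
    push_neg at hall
    exact hq ((Module.forall_dual_apply_eq_zero_iff F2 _).1 hall)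
  set ψ : (Fin m → F2) →ₗ[F2] F2 := φ.comp p.mkQ with hψ
  have hψp : ∀ w ∈ p, ψ w = 0 := by
    intro w hw
    simp [hψ, (Submodule.Quotient.mk_eq_zero p).2 hw, Submodule.mkQ_apply]
  set y : Fin m → F2 := fun i => ψ (Pi.single i 1) with hy
  have hψlin : ∀ w : Fin m → F2, ψ w = y ⬝ᵥ w := by
    intro w
    have hw : ∑ i, Pi.single i (w i) = w := Finset.univ_sum_single w
    have hsingle : ∀ i, ψ (Pi.single i (w i)) = w i * ψ (Pi.single i 1) := by
      intro i
      have h01 : w i = 0 ∨ w i = 1 := by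
        have : ∀ a : F2, a = 0 ∨ a = 1 := by decide
        exact this (w i)
      rcases h01 with h | h <;> rw [h] <;> simp
    calc ψ w = ψ (∑ i, Pi.single i (w i)) := by rw [hw]
      _ = ∑ i, ψ (Pi.single i (w i)) := map_sum ψ _ _
      _ = ∑ i, w i * ψ (Pi.single i 1) := by simp [hsingle]
      _ = y ⬝ᵥ w := by simp [dotProduct, hy, mul_comm]
  have hker : Mᵀ.mulVec y = 0 := by
    funext j
    have hcol : M.mulVec (Pi.single j 1) ∈ p := LinearMap.mem_range_self _ _
    have h0 : ψ (M.mulVec (Pi.single j 1)) = 0 := hψp _ hcol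
    rw [hψlin] at h0
    have : Mᵀ.mulVec y j = y ⬝ᵥ M.mulVec (Pi.single j 1) := by
      rw [mulVec_transpose]
      simp [vecMul, dotProduct, mulVec, Pi.single_apply, Finset.mul_sum, mul_comm]
    rw [this, h0]
    rfl
  have := h y hker
  rw [← hψlin] at this
  exact hφ (by simpa [hψ, Submodule.mkQ_apply] using this)

/-- weight of `M *ᵥ x` is at most the weight of `M`. -/
lemma vwt_mulVec_le {m n : ℕ} (M : Matrix (Fin m) (Fin n) F2) (x : Fin n → F2) :
    vwt (M.mulVec x) ≤ mwt M := by
  have hmwt : mwt M = ∑ i, (Finset.univ.filter fun j => M i j ≠ 0).card := by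
    rw [mwt, Finset.card_filter, Fintype.sum_prod_type]
    congr 1
    funext i
    rw [Finset.card_filter]
  rw [hmwt, vwt, Finset.card_filter]
  refine Finset.sum_le_sum fun i _ => ?_
  by_cases hi : M.mulVec x i ≠ 0
  · rw [if_pos hi]
    have : ∃ j, M i j * x j ≠ 0 := by
      by_contra hc
      push_neg at hc
      refine hi ?_
      show (M i) ⬝ᵥ x = 0
      exact Finset.sum_eq_zero fun j _ => hc j
    obtain ⟨j, hj⟩ := this
    have : j ∈ Finset.univ.filter fun j => M i j ≠ 0 :=
      Finset.mem_filter.2 ⟨Finset.mem_univ _, fun h0 => hj (by rw [h0]; ring)⟩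
    exact Finset.card_pos.2 ⟨j, this⟩
  · rw [if_neg hi]
    exact Nat.zero_le _

lemma mwt_transpose {m n : ℕ} (M : Matrix (Fin m) (Fin n) F2) : mwt Mᵀ = mwt M := by
  rw [mwt, mwt]
  apply Finset.card_nbij' (fun p => (p.2, p.1)) (fun p => (p.2, p.1)) <;>
    simp [Matrix.transpose_apply, Set.MapsTo, Set.LeftInvOn, Set.RightInvOn]
  · intro a b h; exact (Finset.mem_filter.1 h).2
  · intro a b h; exact Finset.mem_filter.2 ⟨Finset.mem_univ _, h⟩

/-- Pure linear-algebra core : conditions (A) and (B) imply triviality. -/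
lemma trivial_of_conditions {nm1 n0 n1 : ℕ}
    (dm1 : Matrix (Fin n0) (Fin nm1) F2) (d0 : Matrix (Fin n1) (Fin n0) F2)
    (hchain : d0 * dm1 = 0)
    (Sa : Matrix (Fin n0) (Fin nm1) F2) (Sb : Matrix (Fin n1) (Fin n0) F2)
    (hcycle : d0 * Sa = Sb * dm1)
    (hA : ∀ x, dm1.mulVec x = 0 → ∃ y, dm1.mulVec y = Sa.mulVec x)
    (hB : ∀ x, d0.mulVec x = 0 → ∃ y, d0.mulVec y = Sb.mulVec x) :
    ∃ (Ra : Matrix (Fin nm1) (Fin nm1) F2) (Rb : Matrix (Fin n0) (Fin n0) F2)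
      (Rc : Matrix (Fin n1) (Fin n1) F2),
      Sa = dm1 * Ra + Rb * dm1 ∧ Sb = d0 * Rb + Rc * d0 := by
  set D1 := Matrix.toLin' dm1 with hD1
  set D0 := Matrix.toLin' d0 with hD0
  set A := Matrix.toLin' Sa with hA'
  set B := Matrix.toLin' Sb with hB'
  have happ : ∀ {a b : ℕ} (M : Matrix (Fin a) (Fin b) F2) (v : Fin b → F2),
      Matrix.toLin' M v = M.mulVec v := fun M v => Matrix.toLin'_apply M v
  have hchainL : D0.comp D1 = 0 := by
    rw [hD0, hD1, ← Matrix.toLin'_mul, hchain]; ext v; simp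
  have hcycleL : D0.comp A = B.comp D1 := by
    rw [hD0, hA', hB', hD1, ← Matrix.toLin'_mul, ← Matrix.toLin'_mul, hcycle]
  -- Step 1: Ra with D1 (Ra x) = A x on ker D1
  obtain ⟨u₁, hu₁⟩ := lift_aux D1 (A.comp (LinearMap.ker D1).subtype)
    (fun x => by
      obtain ⟨y, hy⟩ := hA x.1 (LinearMap.mem_ker.1 x.2)
      exact ⟨y, hy⟩)
  obtain ⟨ra, hra⟩ := LinearMap.exists_extend u₁
  have hstep1 : ∀ x, D1 x = 0 → D1 (ra x) = A x := by
    intro x hx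
    have hx' : x ∈ LinearMap.ker D1 := hx
    have := LinearMap.congr_fun hu₁ ⟨x, hx'⟩
    have hra' := LinearMap.congr_fun hra ⟨x, hx'⟩
    simp only [LinearMap.comp_apply, Submodule.subtype_apply] at this hra' ⊢
    rw [hra', this]
  -- Step 2: Rb0 with Rb0 ∘ D1 = A - D1 ∘ ra
  obtain ⟨rb, hrb⟩ := factor_aux D1 (A - D1.comp ra)
    (fun x hx => by simp [LinearMap.sub_apply, hstep1 x hx])
  -- Step 3: B' := B - D0 ∘ rb kills range D1
  set B' := B - D0.comp rb with hB'def
  have hB'D1 : ∀ z, B' (D1 z) = 0 := by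
    intro z
    have h1 : rb (D1 z) = A z - D1 (ra z) := LinearMap.congr_fun hrb z
    have h2 : D0 (A z) = B (D1 z) := LinearMap.congr_fun hcycleL z
    have h3 : D0 (D1 (ra z)) = 0 := LinearMap.congr_fun hchainL (ra z)
    simp [hB'def, LinearMap.sub_apply, h1, map_sub, h2, h3]
  -- Step 4: B' maps ker D0 into range D0
  have hB'K : ∀ x, D0 x = 0 → ∃ y, D0 y = B' x := by
    intro x hx
    obtain ⟨y, hy⟩ := hB x (by simpa [hD0, happ] using hx)
    refine ⟨y - rb x, ?_⟩
    simp [hB'def, map_sub, LinearMap.sub_apply]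
    rw [show D0 y = B x from by simpa [hD0, hB', happ] using hy]
  -- Step 5: build Q with Q ∘ D1 = 0 and D0 (Q x) = B' x for x ∈ ker D0
  set Kk := LinearMap.ker D0 with hKk
  obtain ⟨ψ, hψ⟩ := lift_aux D0 (B'.comp Kk.subtype)
    (fun x => hB'K x.1 x.2)
  set J' : Submodule F2 Kk := (LinearMap.range D1).comap Kk.subtype with hJ'
  have hψJ : ∀ x : J', ψ x.1 ∈ Kk := by
    intro x
    obtain ⟨z, hz⟩ := x.2
    have : D0 (ψ x.1) = B' x.1.1 := LinearMap.congr_fun hψ x.1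
    have hx0 : B' x.1.1 = 0 := by
      have hz' : (x.1 : Fin n0 → F2) = D1 z := by simpa using hz.symm
      rw [hz']; exact hB'D1 z
    exact LinearMap.mem_ker.2 (by rw [this, hx0])
  obtain ⟨mext, hmext⟩ := LinearMap.exists_extend
    ((ψ.comp J'.subtype).codRestrict Kk (fun x => hψJ x))
  set ψ' : Kk →ₗ[F2] (Fin n0 → F2) := ψ - Kk.subtype.comp mext with hψ'
  have hψ'J : ∀ x : Kk, x.1 ∈ LinearMap.range D1 → ψ' x = 0 := by
    intro x hx
    have := LinearMap.congr_fun hmext ⟨x, hx⟩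
    have h2 : (Kk.subtype.comp mext) x = ψ x := by
      have h3 := congrArg Subtype.val this
      exact h3
    rw [hψ', LinearMap.sub_apply, h2, sub_self]
  have hψ'D0 : ∀ x : Kk, D0 (ψ' x) = B' x.1 := by
    intro x
    have h1 : D0 (ψ x) = B' x.1 := LinearMap.congr_fun hψ x
    have h2 : D0 ((Kk.subtype.comp mext) x) = 0 := (mext x).2
    rw [hψ', LinearMap.sub_apply, map_sub, h1, h2, sub_zero]
  obtain ⟨Kc, hKc⟩ := Submodule.exists_isCompl Kk
  set e := Kk.linearProjOfIsCompl Kc hKc with he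
  set Q : (Fin n0 → F2) →ₗ[F2] (Fin n0 → F2) := ψ'.comp e with hQ
  have hQD1 : ∀ z, Q (D1 z) = 0 := by
    intro z
    have hmem : D1 z ∈ Kk := LinearMap.mem_ker.2 (LinearMap.congr_fun hchainL z)
    have : e (D1 z) = ⟨D1 z, hmem⟩ :=
      Submodule.linearProjOfIsCompl_apply_left hKc ⟨D1 z, hmem⟩
    rw [hQ, LinearMap.comp_apply, this]
    exact hψ'J _ ⟨z, rfl⟩
  have hQK : ∀ x : Kk, D0 (Q x.1) = B' x.1 := by
    intro x
    have : e x.1 = x := Submodule.linearProjOfIsCompl_apply_left hKc x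
    rw [hQ, LinearMap.comp_apply, this]
    exact hψ'D0 x
  -- Step 6: Rc with Rc ∘ D0 = B' - D0 ∘ Q
  obtain ⟨rc, hrc⟩ := factor_aux D0 (B' - D0.comp Q)
    (fun x hx => by
      have := hQK ⟨x, LinearMap.mem_ker.2 hx⟩
      simp [LinearMap.sub_apply, this])
  -- Assemble matrices
  refine ⟨LinearMap.toMatrix' ra, LinearMap.toMatrix' (rb + Q), LinearMap.toMatrix' rc, ?_, ?_⟩
  · apply Matrix.toLin'.injective
    rw [map_add Matrix.toLin' _ _, Matrix.toLin'_mul, Matrix.toLin'_mul, Matrix.toLin'_toMatrix',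
      Matrix.toLin'_toMatrix']
    refine LinearMap.ext fun x => ?_
    have h1 : rb (D1 x) = A x - D1 (ra x) := LinearMap.congr_fun hrb x
    simp only [LinearMap.add_apply, LinearMap.comp_apply, ← hD1, ← hA']
    rw [h1, hQD1 x]
    abel
  · apply Matrix.toLin'.injective
    rw [map_add Matrix.toLin' _ _, Matrix.toLin'_mul, Matrix.toLin'_mul, Matrix.toLin'_toMatrix',
      Matrix.toLin'_toMatrix']
    refine LinearMap.ext fun x => ?_
    have h1 : rc (D0 x) = B' x - D0 (Q x) := LinearMap.congr_fun hrc x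
    simp only [LinearMap.add_apply, LinearMap.comp_apply, ← hD0, ← hB']
    rw [h1, hB'def]
    simp only [LinearMap.sub_apply, LinearMap.comp_apply, map_add]
    abel

/-- distance bound for level-1 homology of the double product:
`d̆₁ ≥ min(d̃₀, d̃₋₁ᵀ)`, in reshaped matrix form. -/
theorem double_product_level1_distance
    (nm1 n0 n1 : ℕ)
    (dm1 : Matrix (Fin n0) (Fin nm1) F2) (d0 : Matrix (Fin n1) (Fin n0) F2)
    (hchain : d0 * dm1 = 0)
    (Sa : Matrix (Fin n0) (Fin nm1) F2) (Sb : Matrix (Fin n1) (Fin n0) F2)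
    (hcycle : d0 * Sa = Sb * dm1)
    (hnontriv : ¬ ∃ (Ra : Matrix (Fin nm1) (Fin nm1) F2) (Rb : Matrix (Fin n0) (Fin n0) F2)
      (Rc : Matrix (Fin n1) (Fin n1) F2),
      Sa = dm1 * Ra + Rb * dm1 ∧ Sb = d0 * Rb + Rc * d0) :
    (∃ c : Fin n0 → F2, d0.mulVec c = 0 ∧ (¬ ∃ y : Fin nm1 → F2, dm1.mulVec y = c) ∧
      vwt c ≤ mwt Sa + mwt Sb) ∨
    (∃ c' : Fin n0 → F2, dm1ᵀ.mulVec c' = 0 ∧ (¬ ∃ y : Fin n1 → F2, d0ᵀ.mulVec y = c') ∧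
      vwt c' ≤ mwt Sa + mwt Sb) := by
  by_contra hcon
  rw [not_or] at hcon
  obtain ⟨h1, h2⟩ := hcon
  have hA : ∀ x, dm1.mulVec x = 0 → ∃ y, dm1.mulVec y = Sa.mulVec x := by
    intro x hx
    by_contra hne
    exact h1 ⟨Sa.mulVec x,
      by rw [Matrix.mulVec_mulVec, hcycle, ← Matrix.mulVec_mulVec, hx, Matrix.mulVec_zero],
      hne, le_trans (vwt_mulVec_le Sa x) (Nat.le_add_right _ _)⟩
  have hBT : ∀ y, d0ᵀ.mulVec y = 0 → ∃ z, d0ᵀ.mulVec z = Sbᵀ.mulVec y := by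
    intro y hy
    by_contra hne
    refine h2 ⟨Sbᵀ.mulVec y, ?_, hne, ?_⟩
    · rw [Matrix.mulVec_mulVec, ← Matrix.transpose_mul, ← hcycle, Matrix.transpose_mul,
        ← Matrix.mulVec_mulVec, hy, Matrix.mulVec_zero]
    · calc vwt (Sbᵀ.mulVec y) ≤ mwt Sbᵀ := vwt_mulVec_le _ _
        _ = mwt Sb := mwt_transpose Sb
        _ ≤ mwt Sa + mwt Sb := Nat.le_add_left _ _
  have hB : ∀ x, d0.mulVec x = 0 → ∃ y, d0.mulVec y = Sb.mulVec x := by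
    intro x hx
    apply mem_range_of_orth
    intro y hy
    obtain ⟨z, hz⟩ := hBT y hy
    rw [Matrix.dotProduct_mulVec, ← Matrix.mulVec_transpose, ← hz,
      Matrix.mulVec_transpose, ← Matrix.dotProduct_mulVec, hx, dotProduct_zero]
  exact hnontriv (trivial_of_conditions dm1 d0 hchain Sa Sb hcycle hA hB)
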